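/- Let u : [0,∞) → [0,∞) be a continuous, strictly increasing bijection with u(0) = 0, let f(x) = e^{−u(x)}, η ∈ (0,∞), f_η = f^η with inverse g_η. Consider n experts with uniform prior P_0(θ) = 1/n, outcomes ω_1,…,ω_T ∈ Ω, predictions ξ_t(θ) ∈ Γ, weights P_t(θ) = f_η(λ(ω_t, ξ_t(θ)))·P_{t−1}(θ), and pseudo-predictions ψ_t(ω) = g_η(∑_{θ=1}^n f_η(λ(ω, ξ_t(θ))) P_{t−1}(θ) / ∑_{θ=1}^n P_{t−1}(θ)). Suppose in each round t the learner plays γ_t ∈ Γ with λ(ω, γ_t) ≤ ψ_t(ω) for all ω ∈ Ω. Then for every expert θ and every T, ∑_{t=1}^T u(λ(ω_t, γ_t)) ≤ ∑_{t=1}^T u(λ(ω_t, ξ_t(θ))) + ln(n)/η; equivalently, Q^u_T(λ(ω_1,γ_1),…,λ(ω_T,γ_T)) ≤ u^{−1}(u(Q^u_T(λ(ω_1,ξ_1(θ)),…,λ(ω_T,ξ_T(θ)))) + ln(n)/η). -/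

import Mathlib

/-- **Change of variables for the AA (Corollary `corollary:change of variables of the AA`).**
For `f x = exp (−u x)`, `f_η x = exp (−η·u x)` with inverse `g_η y = v (−ln y / η)`
(`v` the inverse of `u`), the AA-QS with `n` experts, uniform prior, weight updates
`P_t θ = f_η (λ(ω_t, ξ_t θ)) · P_{t-1} θ`, pseudo-predictions
`ψ_t(ω) = g_η (∑_θ f_η (λ(ω, ξ_t θ)) P_{t-1} θ / ∑_θ P_{t-1} θ)` and learner's
predictions `γ_t` satisfying `λ(ω, γ_t) ≤ ψ_t(ω)` for all `ω` achieves, for every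
expert `θ` and horizon `T`:
`∑_t u (λ(ω_t, γ_t)) ≤ ∑_t u (λ(ω_t, ξ_t θ)) + ln n / η`; equivalently
`Q^u_T(learner) ≤ u⁻¹(u (Q^u_T(θ)) + ln n / η)`. -/
theorem stmt_8
    {Ω Γ : Type*}
    -- u : [0,∞) → [0,∞) continuous strictly increasing bijection, v its inverse
    (u v : ℝ → ℝ)
    (hu_cont : ContinuousOn u (Set.Ici (0 : ℝ)))
    (hu_mono : StrictMonoOn u (Set.Ici (0 : ℝ)))
    (hu0 : u 0 = 0)
    (hu_maps : ∀ x : ℝ, 0 ≤ x → 0 ≤ u x)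
    (hu_surj : ∀ y : ℝ, 0 ≤ y → ∃ x : ℝ, 0 ≤ x ∧ u x = y)
    (hv_left : ∀ x : ℝ, 0 ≤ x → v (u x) = x)
    (hv_right : ∀ y : ℝ, 0 ≤ y → u (v y) = y)
    (hv_nonneg : ∀ y : ℝ, 0 ≤ y → 0 ≤ v y)
    -- learning rate, weighting profile, η-scaled profile and its inverse
    (η : ℝ) (hη : 0 < η)
    (f fη gη : ℝ → ℝ)
    (hf_def : ∀ x, f x = Real.exp (-(u x)))
    (hfη_def : ∀ x, fη x = Real.exp (-(η * u x)))
    (hgη_def : ∀ y, gη y = v (-Real.log y / η))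
    -- loss function
    (lam : Ω → Γ → ℝ) (hlam_nonneg : ∀ (w : Ω) (γ : Γ), 0 ≤ lam w γ)
    -- n experts, outcomes, predictions
    (n : ℕ) (hn : 1 ≤ n) (T : ℕ) (ω : Fin T → Ω) (ξ : Fin T → Fin n → Γ)
    -- uniform prior and weight updates
    (P : ℕ → Fin n → ℝ)
    (hP_init : ∀ θ, P 0 θ = 1 / (n : ℝ))
    (hP_step : ∀ (t : Fin T) (θ : Fin n),
      P ((t : ℕ) + 1) θ = fη (lam (ω t) (ξ t θ)) * P (t : ℕ) θ)
    -- pseudo-predictions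
    (ψ : Fin T → Ω → ℝ)
    (hψ : ∀ (t : Fin T) (w : Ω), ψ t w =
      gη ((∑ θ, fη (lam w (ξ t θ)) * P (t : ℕ) θ) / ∑ θ, P (t : ℕ) θ))
    -- the learner's predictions, substituting the pseudo-predictions
    (γL : Fin T → Γ)
    (hsub : ∀ (t : Fin T) (w : Ω), lam w (γL t) ≤ ψ t w) :
    (∀ θ : Fin n,
      ∑ t, u (lam (ω t) (γL t)) ≤ ∑ t, u (lam (ω t) (ξ t θ)) + Real.log n / η) ∧
    (∀ θ : Fin n,
      v (∑ t, u (lam (ω t) (γL t))) ≤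
        v (u (v (∑ t, u (lam (ω t) (ξ t θ)))) + Real.log n / η)) := by
  have hn0 : (0:ℝ) < n := by exact_mod_cast hn
  set W : ℕ → ℝ := fun m => ∑ θ, P m θ with hW
  -- positivity of weights
  have hPpos : ∀ m, m ≤ T → ∀ θ, 0 < P m θ := by
    intro m hm
    induction m with
    | zero => intro θ; rw [hP_init]; positivity
    | succ k ih =>
      intro θ
      have hk : k < T := hm
      have h := hP_step ⟨k, hk⟩ θ
      simp only at h
      rw [h, hfη_def]
      exact mul_pos (Real.exp_pos _) (ih (le_of_lt hk) θ)
  have hWpos : ∀ m, m ≤ T → 0 < W m := by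
    intro m hm
    have : Nonempty (Fin n) := Fin.pos_iff_nonempty.mp hn
    exact Finset.sum_pos (fun θ _ => hPpos m hm θ) Finset.univ_nonempty
  -- fη ≤ 1 on nonneg losses
  have hfη_le_one : ∀ x, 0 ≤ x → fη x ≤ 1 := by
    intro x hx
    rw [hfη_def]
    apply Real.exp_le_one_iff.mpr
    have := hu_maps x hx
    nlinarith
  -- key per-round inequality
  have hstep : ∀ t : Fin T,
      u (lam (ω t) (γL t)) ≤ (Real.log (W t) - Real.log (W ((t:ℕ)+1))) / η := by
    intro t
    have ht1 : (t:ℕ) + 1 ≤ T := t.isLt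
    have hWt := hWpos t (le_of_lt t.isLt)
    have hWt1 := hWpos ((t:ℕ)+1) ht1
    have hsumeq : ∑ θ, fη (lam (ω t) (ξ t θ)) * P (t:ℕ) θ = W ((t:ℕ)+1) :=
      Finset.sum_congr rfl (fun θ _ => (hP_step t θ).symm)
    have hWle : W ((t:ℕ)+1) ≤ W (t:ℕ) := by
      apply Finset.sum_le_sum
      intro θ _
      rw [hP_step t θ]
      have := hfη_le_one _ (hlam_nonneg (ω t) (ξ t θ))
      nlinarith [hPpos (t:ℕ) (le_of_lt t.isLt) θ]
    set s : ℝ := (Real.log (W t) - Real.log (W ((t:ℕ)+1))) / η with hs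
    have hs_nonneg : 0 ≤ s := by
      apply div_nonneg _ (le_of_lt hη)
      have := Real.log_le_log hWt1 hWle
      linarith
    have hψeq : ψ t (ω t) = v s := by
      rw [hψ, hgη_def, hsumeq, Real.log_div (ne_of_gt hWt1) (ne_of_gt hWt), hs]
      ring_nf
    have hle := hsub t (ω t)
    have hψnn : 0 ≤ ψ t (ω t) := by rw [hψeq]; exact hv_nonneg s hs_nonneg
    calc u (lam (ω t) (γL t))
        ≤ u (ψ t (ω t)) := hu_mono.monotoneOn (hlam_nonneg _ _) hψnn hle
      _ = s := by rw [hψeq]; exact hv_right s hs_nonneg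
  -- telescoping for W
  have hWtel : ∑ t : Fin T, (Real.log (W t) - Real.log (W ((t:ℕ)+1))) / η
      = (Real.log (W 0) - Real.log (W T)) / η := by
    rw [← Finset.sum_div]
    congr 1
    rw [Fin.sum_univ_eq_sum_range (fun k => Real.log (W k) - Real.log (W (k+1)))]
    exact Finset.sum_range_sub' (fun k => Real.log (W k)) T
  have hW0 : W 0 = 1 := by
    simp only [hW, hP_init]
    rw [Finset.sum_const, Finset.card_univ, Fintype.card_fin]
    rw [nsmul_eq_mul, mul_one_div_cancel (ne_of_gt hn0)]
  -- learner's bound via log of total weight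
  have hlearner : ∑ t, u (lam (ω t) (γL t)) ≤ - Real.log (W T) / η := by
    calc ∑ t, u (lam (ω t) (γL t))
        ≤ ∑ t : Fin T, (Real.log (W t) - Real.log (W ((t:ℕ)+1))) / η :=
          Finset.sum_le_sum (fun t _ => hstep t)
      _ = (Real.log (W 0) - Real.log (W T)) / η := hWtel
      _ = - Real.log (W T) / η := by rw [hW0, Real.log_one]; ring
  -- expert weight formula
  have hexp : ∀ θ : Fin n, Real.log (P T θ)
      = -Real.log n - η * ∑ t : Fin T, u (lam (ω t) (ξ t θ)) := by
    intro θ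
    have htel : ∑ t : Fin T, (Real.log (P ((t:ℕ)+1) θ) - Real.log (P (t:ℕ) θ))
        = Real.log (P T θ) - Real.log (P 0 θ) := by
      rw [Fin.sum_univ_eq_sum_range (fun k => Real.log (P (k+1) θ) - Real.log (P k θ))]
      exact Finset.sum_range_sub (fun k => Real.log (P k θ)) T
    have hterm : ∀ t : Fin T,
        Real.log (P ((t:ℕ)+1) θ) - Real.log (P (t:ℕ) θ)
          = -(η * u (lam (ω t) (ξ t θ))) := by
      intro t
      rw [hP_step t θ, hfη_def,
        Real.log_mul (Real.exp_ne_zero _) (ne_of_gt (hPpos t (le_of_lt t.isLt) θ)),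
        Real.log_exp]
      ring
    rw [Finset.sum_congr rfl (fun t _ => hterm t)] at htel
    have hP0 : Real.log (P 0 θ) = -Real.log n := by
      rw [hP_init, Real.log_div one_ne_zero (ne_of_gt hn0), Real.log_one]
      ring
    rw [Finset.sum_neg_distrib, ← Finset.mul_sum] at htel
    linarith [htel, hP0.symm ▸ htel]
  have hmain : ∀ θ : Fin n,
      ∑ t, u (lam (ω t) (γL t)) ≤ ∑ t, u (lam (ω t) (ξ t θ)) + Real.log n / η := by
    intro θ
    have hPle : P T θ ≤ W T :=
      Finset.single_le_sum (fun θ' _ => le_of_lt (hPpos T le_rfl θ')) (Finset.mem_univ θ)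
    have hlog : Real.log (P T θ) ≤ Real.log (W T) :=
      Real.log_le_log (hPpos T le_rfl θ) hPle
    rw [hexp θ] at hlog
    have h3 : - Real.log (W T) ≤ Real.log n + η * ∑ t, u (lam (ω t) (ξ t θ)) := by
      linarith
    calc ∑ t, u (lam (ω t) (γL t)) ≤ - Real.log (W T) / η := hlearner
      _ ≤ (Real.log n + η * ∑ t, u (lam (ω t) (ξ t θ))) / η :=
          div_le_div_of_nonneg_right h3 hη.le
      _ = ∑ t, u (lam (ω t) (ξ t θ)) + Real.log n / η := by field_simp; ring
  refine ⟨hmain, ?_⟩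
  intro θ
  have hvmono : ∀ a b : ℝ, 0 ≤ a → 0 ≤ b → a ≤ b → v a ≤ v b := by
    intro a b ha hb hab
    by_contra hlt
    push_neg at hlt
    have := hu_mono (hv_nonneg b hb) (hv_nonneg a ha) hlt
    rw [hv_right a ha, hv_right b hb] at this
    linarith
  have hA : 0 ≤ ∑ t, u (lam (ω t) (γL t)) :=
    Finset.sum_nonneg (fun t _ => hu_maps _ (hlam_nonneg _ _))
  have hB : 0 ≤ ∑ t, u (lam (ω t) (ξ t θ)) :=
    Finset.sum_nonneg (fun t _ => hu_maps _ (hlam_nonneg _ _))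
  have hlogn : 0 ≤ Real.log n := Real.log_nonneg (by exact_mod_cast hn)
  have hBeq : u (v (∑ t, u (lam (ω t) (ξ t θ)))) = ∑ t, u (lam (ω t) (ξ t θ)) :=
    hv_right _ hB
  rw [hBeq]
  exact hvmono _ _ hA (by positivity) (hmain θ)
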